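/- Let C^c_{HL,b}(α) = sup over measurable sets E ⊆ ℝⁿ with 0 < |E| < ∞ of (1/|E|)·|{x ∈ ℝⁿ : M^c_{HL,b} χ_E(x) > α}|. Then C^c_{HL,b}(α) − 1 ∼_n 1/α − 1 as α → 1⁻; that is, there exist constants 0 < c ≤ C depending only on n and a threshold α₀ ∈ (0,1) such that for all α ∈ (α₀, 1), c·(1/α − 1) ≤ C^c_{HL,b}(α) − 1 ≤ C·(1/α − 1). In particular lim_{α→1⁻} C^c_{HL,b}(α) = 1. -/

import Mathlib

open MeasureTheory Set Filter
open scoped ENNReal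

/-- The centered Hardy–Littlewood maximal operator with respect to
Euclidean balls on `ℝⁿ`. -/
noncomputable def MHLbc (n : ℕ) (f : EuclideanSpace ℝ (Fin n) → ℝ≥0∞)
    (x : EuclideanSpace ℝ (Fin n)) : ℝ≥0∞ :=
  ⨆ (r : ℝ) (_ : 0 < r),
    (∫⁻ y in Metric.ball x r, f y) / volume (Metric.ball x r)

/-- The sharp Tauberian constant `C^c_{HL,b}(α)` of the centered
Hardy–Littlewood maximal operator with respect to balls. -/
noncomputable def CHLbc (n : ℕ) (α : ℝ) : ℝ≥0∞ :=
  ⨆ (E : Set (EuclideanSpace ℝ (Fin n))) (_ : MeasurableSet E)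
    (_ : 0 < volume E) (_ : volume E < ⊤),
    volume {x : EuclideanSpace ℝ (Fin n) |
      MHLbc n (E.indicator 1) x > ENNReal.ofReal α} / volume E

lemma box_eq_preimage {n : ℕ} (I : Fin n → Set ℝ) :
    {y : EuclideanSpace ℝ (Fin n) | ∀ i, y i ∈ I i}
      = (MeasurableEquiv.toLp 2 (Fin n → ℝ)).symm ⁻¹' (Set.univ.pi I) := by
  ext y; simp [MeasurableEquiv.coe_toLp_symm, Set.mem_pi]

lemma volume_box {n : ℕ} (I : Fin n → Set ℝ) :
    volume {y : EuclideanSpace ℝ (Fin n) | ∀ i, y i ∈ I i} = ∏ i, volume (I i) := by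
  rw [← volume_pi_pi I, box_eq_preimage,
    (EuclideanSpace.volume_preserving_symm_measurableEquiv_toLp (Fin n)).measure_preimage_equiv]

lemma measurableSet_box {n : ℕ} (I : Fin n → Set ℝ) (hI : ∀ i, MeasurableSet (I i)) :
    MeasurableSet {y : EuclideanSpace ℝ (Fin n) | ∀ i, y i ∈ I i} := by
  rw [box_eq_preimage]
  exact (MeasurableEquiv.toLp 2 (Fin n → ℝ)).symm.measurable (MeasurableSet.univ_pi hI)

lemma abs_coord_le_norm {n : ℕ} (x : EuclideanSpace ℝ (Fin n)) (i : Fin n) : |x i| ≤ ‖x‖ := by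
  rw [EuclideanSpace.norm_eq]
  rw [show |x i| = Real.sqrt ((x i)^2) from (Real.sqrt_sq_eq_abs _).symm]
  apply Real.sqrt_le_sqrt
  calc (x i)^2 ≤ ∑ j, (x j)^2 :=
        Finset.single_le_sum (f := fun j => (x j)^2) (fun j _ => sq_nonneg _) (Finset.mem_univ i)
    _ = ∑ j, ‖x j‖^2 := by simp [sq_abs]

lemma le_MHLbc {n : ℕ} (f : EuclideanSpace ℝ (Fin n) → ℝ≥0∞) (x : EuclideanSpace ℝ (Fin n))
    {r : ℝ} (hr : 0 < r) :
    (∫⁻ y in Metric.ball x r, f y) / volume (Metric.ball x r) ≤ MHLbc n f x := by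
  exact le_iSup₂ (f := fun (r : ℝ) (_ : 0 < r) =>
    (∫⁻ y in Metric.ball x r, f y) / volume (Metric.ball x r)) r hr

lemma lintegral_indicator_ball {n : ℕ} {E : Set (EuclideanSpace ℝ (Fin n))}
    (hE : MeasurableSet E) (x : EuclideanSpace ℝ (Fin n)) (r : ℝ) :
    ∫⁻ y in Metric.ball x r, E.indicator 1 y = volume (E ∩ Metric.ball x r) := by
  rw [lintegral_indicator_one hE, Measure.restrict_apply hE]

-- the unit ball volume is at most 2^n
lemma volume_unit_ball_le {n : ℕ} :
    volume (Metric.ball (0 : EuclideanSpace ℝ (Fin n)) 1) ≤ 2 ^ n := by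
  have h : Metric.ball (0 : EuclideanSpace ℝ (Fin n)) 1
      ⊆ {y : EuclideanSpace ℝ (Fin n) | ∀ i, y i ∈ Set.Icc (-1 : ℝ) 1} := by
    intro y hy i
    simp only [Metric.mem_ball, dist_zero_right] at hy
    have := abs_coord_le_norm y i
    have : |y i| ≤ 1 := this.trans hy.le
    exact abs_le.mp this
  calc volume (Metric.ball (0 : EuclideanSpace ℝ (Fin n)) 1)
      ≤ volume {y : EuclideanSpace ℝ (Fin n) | ∀ i, y i ∈ Set.Icc (-1 : ℝ) 1} := measure_mono h
    _ = ∏ _i : Fin n, volume (Set.Icc (-1 : ℝ) 1) := volume_box _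
    _ = 2 ^ n := by
        rw [Finset.prod_const, Real.volume_Icc, show ((1:ℝ) - -1) = 2 by norm_num,
          ENNReal.ofReal_ofNat]
        simp

set_option maxHeartbeats 2000000 in
lemma CHLbc_lower (n : ℕ) (hn : 1 ≤ n) :
    ∃ c₁ : ℝ, 0 < c₁ ∧ ∀ α ∈ Set.Ioo (1/2 : ℝ) 1,
      1 + ENNReal.ofReal (c₁ * (1 - α)) ≤ CHLbc n α := by
  set i0 : Fin n := ⟨0, hn⟩ with hi0
  haveI : Nontrivial (EuclideanSpace ℝ (Fin n)) := by
    refine ⟨EuclideanSpace.single i0 1, 0, ?_⟩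
    intro h
    have := congrArg norm h
    rw [EuclideanSpace.norm_single, norm_zero] at this
    norm_num at this
  set β : ℝ := 1 / (4 * n) with hβdef
  have hn1 : (1:ℝ) ≤ n := by exact_mod_cast hn
  have hβ : 0 < β := by positivity
  refine ⟨(2*β)^(n-1) / 2^(n+1), by positivity, fun α hα => ?_⟩
  obtain ⟨hα2, hα1⟩ := hα
  set ωe := volume (Metric.ball (0 : EuclideanSpace ℝ (Fin n)) 1) with hωe
  have hω0 : ωe ≠ 0 := (Metric.measure_ball_pos _ _ one_pos).ne'
  have hωt : ωe ≠ ⊤ := measure_ball_lt_top.ne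
  set ω := ωe.toReal with hωdef
  have hω : 0 < ω := ENNReal.toReal_pos hω0 hωt
  have hω2n : ω ≤ 2 ^ n := by
    have h := volume_unit_ball_le (n := n)
    have := ENNReal.toReal_mono (by simp) h
    simpa using this
  set δ : ℝ := (1 - α) * ω / 2 ^ (n + 2) with hδdef
  have hδ0 : 0 < δ := by
    apply div_pos (mul_pos (by linarith) hω) (by positivity)
  have hδ8 : δ ≤ 1 / 8 := by
    have h1 : (1 - α) * ω ≤ (1/2) * 2 ^ n :=
      mul_le_mul (by linarith) hω2n hω.le (by norm_num)
    have h2 : δ ≤ ((1/2) * 2 ^ n) / 2 ^ (n + 2) := by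
      apply div_le_div_of_nonneg_right h1 (by positivity) |>.trans_eq rfl
    have h3 : ((1/2 : ℝ) * 2 ^ n) / 2 ^ (n + 2) = 1 / 8 := by
      rw [pow_add]
      have : (2:ℝ)^n ≠ 0 := by positivity
      field_simp
      ring
    linarith [h2, h3.le]
  -- the set E
  set E : Set (EuclideanSpace ℝ (Fin n)) :=
    Metric.ball 0 1 ∩ {x | δ < |x i0|} with hEdef
  have habs_cont : Continuous fun x : EuclideanSpace ℝ (Fin n) => |x i0| :=
    continuous_abs.comp (EuclideanSpace.proj (𝕜 := ℝ) i0).continuous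
  have hEopen : IsOpen E :=
    Metric.isOpen_ball.inter (isOpen_lt continuous_const habs_cont)
  have hEmeas : MeasurableSet E := hEopen.measurableSet
  have hEfin : volume E < ⊤ := by
    refine lt_of_le_of_lt (measure_mono inter_subset_left) ?_
    exact measure_ball_lt_top
  have hEpos : 0 < volume E := by
    have hsub : Metric.ball (EuclideanSpace.single i0 (1/2 : ℝ)) (1/8) ⊆ E := by
      intro y hy
      rw [Metric.mem_ball, dist_eq_norm] at hy
      constructor
      · rw [Metric.mem_ball, dist_zero_right]
        calc ‖y‖ = ‖(y - EuclideanSpace.single i0 (1/2:ℝ)) + EuclideanSpace.single i0 (1/2:ℝ)‖ := by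
              rw [sub_add_cancel]
          _ ≤ ‖y - EuclideanSpace.single i0 (1/2:ℝ)‖ + ‖EuclideanSpace.single i0 (1/2:ℝ)‖ :=
              norm_add_le _ _
          _ < 1/8 + 1/2 := by
              rw [EuclideanSpace.norm_single]
              have : ‖(1/2 : ℝ)‖ = 1/2 := by rw [Real.norm_eq_abs]; norm_num
              rw [this]; linarith
          _ < 1 := by norm_num
      · show δ < |y i0|
        have h1 : |y i0 - 1/2| ≤ ‖y - EuclideanSpace.single i0 (1/2:ℝ)‖ := by
          have := abs_coord_le_norm (y - EuclideanSpace.single i0 (1/2:ℝ)) i0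
          rwa [PiLp.sub_apply, EuclideanSpace.single_apply, if_pos rfl] at this
        have h2 : |y i0 - 1/2| < 1/8 := lt_of_le_of_lt h1 hy
        have h3 := abs_lt.mp h2
        have : (3:ℝ)/8 < y i0 := by linarith
        calc δ ≤ 1/8 := hδ8
          _ < y i0 := by linarith
          _ ≤ |y i0| := le_abs_self _
    calc (0:ℝ≥0∞) < volume (Metric.ball (EuclideanSpace.single i0 (1/2 : ℝ)) (1/8)) :=
          Metric.measure_ball_pos _ _ (by norm_num)
      _ ≤ volume E := measure_mono hsub
  set S : Set (EuclideanSpace ℝ (Fin n)) :=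
    {x | MHLbc n (E.indicator 1) x > ENNReal.ofReal α} with hSdef
  have hofα1 : ENNReal.ofReal α < 1 := by
    rw [← ENNReal.ofReal_one]
    exact (ENNReal.ofReal_lt_ofReal_iff one_pos).mpr hα1
  -- E ⊆ S
  have hES : E ⊆ S := by
    intro x hx
    obtain ⟨ρ, hρ0, hρ⟩ := Metric.isOpen_iff.mp hEopen x hx
    show ENNReal.ofReal α < MHLbc n (E.indicator 1) x
    have hb0 : volume (Metric.ball x ρ) ≠ 0 := (Metric.measure_ball_pos _ _ hρ0).ne'
    have hbt : volume (Metric.ball x ρ) ≠ ⊤ := measure_ball_lt_top.ne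
    calc ENNReal.ofReal α < 1 := hofα1
      _ = (∫⁻ y in Metric.ball x ρ, E.indicator 1 y) / volume (Metric.ball x ρ) := by
          rw [lintegral_indicator_ball hEmeas, inter_eq_self_of_subset_right hρ,
            ENNReal.div_self hb0 hbt]
      _ ≤ MHLbc n (E.indicator 1) x := le_MHLbc _ _ hρ0
  -- points in the slab belong to S
  have hkey : ∀ x : EuclideanSpace ℝ (Fin n), ‖x‖ < 1/2 → |x i0| ≤ δ → x ∈ S := by
    intro x hx2 hx1
    set B := Metric.ball x (1/2) with hBdef
    have hB0 : volume B ≠ 0 := (Metric.measure_ball_pos _ _ (by norm_num)).ne'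
    have hBt : volume B ≠ ⊤ := measure_ball_lt_top.ne
    have hBsub : B ⊆ Metric.ball (0 : EuclideanSpace ℝ (Fin n)) 1 := by
      intro y hy
      rw [Metric.mem_ball, dist_zero_right]
      rw [Metric.mem_ball, dist_eq_norm] at hy
      calc ‖y‖ = ‖(y - x) + x‖ := by rw [sub_add_cancel]
        _ ≤ ‖y - x‖ + ‖x‖ := norm_add_le _ _
        _ < 1/2 + 1/2 := by linarith
        _ = 1 := by norm_num
    set Slab : Set (EuclideanSpace ℝ (Fin n)) :=
      {y | ∀ i, y i ∈ (if i = i0 then Set.Icc (-δ) δ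
        else Set.Icc (x i - 1/2) (x i + 1/2))} with hSlabdef
    have hslab : B \ E ⊆ Slab := by
      rintro y ⟨hyB, hyE⟩ i
      by_cases hi : i = i0
      · rw [hi, if_pos rfl]
        have : ¬ (δ < |y i0|) := fun hcon => hyE ⟨hBsub hyB, hcon⟩
        exact abs_le.mp (not_lt.mp this)
      · rw [if_neg hi]
        have h1 : |y i - x i| ≤ ‖y - x‖ := by
          have := abs_coord_le_norm (y - x) i
          rwa [PiLp.sub_apply] at this
        rw [Metric.mem_ball, dist_eq_norm] at hyB
        have h2 : |y i - x i| ≤ 1/2 := by linarith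
        have h3 := abs_le.mp h2
        exact ⟨by linarith [h3.1], by linarith [h3.2]⟩
    have hvolB : volume B = ENNReal.ofReal ((1/2 : ℝ)^n) * ωe := by
      rw [hBdef, Measure.addHaar_ball volume x (by norm_num : (0:ℝ) ≤ 1/2),
        finrank_euclideanSpace_fin]
    have hvol_slab : volume Slab = ENNReal.ofReal ((1 - α)/2) * volume B := by
      rw [hSlabdef, volume_box]
      have hprod : ∀ i : Fin n, volume (if i = i0 then Set.Icc (-δ) δ
          else Set.Icc (x i - 1/2) (x i + 1/2)) =
          (if i = i0 then ENNReal.ofReal (2*δ) else 1) := by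
        intro i
        by_cases hi : i = i0 <;> simp [hi, Real.volume_Icc]
        · rw [← two_mul, ENNReal.ofReal_mul (by norm_num), ENNReal.ofReal_ofNat]
        · norm_num
      rw [Finset.prod_congr rfl (fun i _ => hprod i)]
      rw [Finset.prod_ite_eq' Finset.univ i0 (fun _ => ENNReal.ofReal (2*δ))]
      rw [if_pos (Finset.mem_univ i0), hvolB]
      rw [← ENNReal.ofReal_toReal hωt, ← hωdef,
        ← ENNReal.ofReal_mul (by positivity : (0:ℝ) ≤ (1/2)^n),
        ← ENNReal.ofReal_mul (by linarith : (0:ℝ) ≤ (1-α)/2)]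
      congr 1
      have h2n : (2:ℝ)^n ≠ 0 := by positivity
      have e1 : (2:ℝ)^(n+2) = 4 * 2^n := by rw [pow_add]; ring
      have e2 : (1/2:ℝ)^n = (2^n)⁻¹ := by rw [one_div, inv_pow]
      rw [hδdef, e1, e2]
      field_simp
      ring
    have hEB : ENNReal.ofReal ((1+α)/2) * volume B ≤ volume (E ∩ B) := by
      have hsplit : volume B ≤ volume (E ∩ B) + volume (B \ E) := by
        calc volume B ≤ volume ((E ∩ B) ∪ (B \ E)) := by
              apply measure_mono
              intro y hy
              by_cases hyE : y ∈ E
              · exact Or.inl ⟨hyE, hy⟩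
              · exact Or.inr ⟨hy, hyE⟩
          _ ≤ volume (E ∩ B) + volume (B \ E) := measure_union_le _ _
      have h2 : volume (B \ E) ≤ ENNReal.ofReal ((1-α)/2) * volume B := by
        rw [← hvol_slab]; exact measure_mono hslab
      have hone : ENNReal.ofReal ((1+α)/2) * volume B
          + ENNReal.ofReal ((1-α)/2) * volume B = volume B := by
        rw [← add_mul, ← ENNReal.ofReal_add (by linarith) (by linarith),
          show (1+α)/2 + (1-α)/2 = 1 by ring, ENNReal.ofReal_one, one_mul]
      refine (ENNReal.add_le_add_iff_right
        (a := ENNReal.ofReal ((1-α)/2) * volume B)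
        (ENNReal.mul_ne_top ENNReal.ofReal_ne_top hBt)).mp ?_
      rw [hone]
      exact hsplit.trans (add_le_add_right h2 _)
    show ENNReal.ofReal α < MHLbc n (E.indicator 1) x
    calc ENNReal.ofReal α < ENNReal.ofReal ((1+α)/2) :=
          (ENNReal.ofReal_lt_ofReal_iff (by linarith)).mpr (by linarith)
      _ = ENNReal.ofReal ((1+α)/2) * volume B / volume B := by
          rw [mul_div_assoc, ENNReal.div_self hB0 hBt, mul_one]
      _ ≤ volume (E ∩ B) / volume B := ENNReal.div_le_div_right hEB _
      _ = (∫⁻ y in B, E.indicator 1 y) / volume B := by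
          rw [lintegral_indicator_ball hEmeas]
      _ ≤ MHLbc n (E.indicator 1) x := le_MHLbc _ _ (by norm_num)
  -- the small box
  set Gbox : Set (EuclideanSpace ℝ (Fin n)) :=
    {y | ∀ i, y i ∈ (if i = i0 then Set.Icc (-δ) δ else Set.Icc (-β) β)} with hGdef
  have hGmeas : MeasurableSet Gbox := by
    apply measurableSet_box
    intro i
    by_cases hi : i = i0 <;> simp [hi, measurableSet_Icc]
  have hGS : Gbox ⊆ S := by
    intro y hy
    have hy0 : |y i0| ≤ δ := by
      have := hy i0
      rw [if_pos rfl] at this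
      exact abs_le.mpr this
    apply hkey y _ hy0
    rw [EuclideanSpace.norm_eq]
    rw [show (1/2 : ℝ) = Real.sqrt ((1/2)^2) by rw [Real.sqrt_sq (by norm_num)]]
    apply Real.sqrt_lt_sqrt (by positivity)
    have hsum : ∑ i, ‖y i‖^2 = (y i0)^2 + ∑ i ∈ Finset.univ.erase i0, (y i)^2 := by
      rw [← Finset.add_sum_erase Finset.univ _ (Finset.mem_univ i0)]
      simp [sq_abs, Real.norm_eq_abs]
    rw [hsum]
    have hbound : ∀ i ∈ Finset.univ.erase i0, (y i)^2 ≤ β^2 := by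
      intro i hi
      have hine := hy i
      rw [if_neg (Finset.mem_erase.mp hi).1] at hine
      have : |y i| ≤ β := abs_le.mpr hine
      calc (y i)^2 = |y i|^2 := (sq_abs _).symm
        _ ≤ β^2 := by nlinarith [abs_nonneg (y i)]
    have h1 : ∑ i ∈ Finset.univ.erase i0, (y i)^2 ≤ (n-1 : ℝ) * β^2 := by
      calc ∑ i ∈ Finset.univ.erase i0, (y i)^2 ≤ ∑ _i ∈ Finset.univ.erase i0, β^2 :=
            Finset.sum_le_sum hbound
        _ = ((Finset.univ.erase i0).card : ℝ) * β^2 := by rw [Finset.sum_const, nsmul_eq_mul]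
        _ = (n-1 : ℝ) * β^2 := by
            rw [Finset.card_erase_of_mem (Finset.mem_univ i0), Finset.card_univ,
              Fintype.card_fin]
            have : ((n - 1 : ℕ) : ℝ) = (n : ℝ) - 1 := by
              have := Nat.cast_sub hn (R := ℝ)
              simpa using this
            rw [this]
    have h2 : (y i0)^2 ≤ δ^2 := by
      calc (y i0)^2 = |y i0|^2 := (sq_abs _).symm
        _ ≤ δ^2 := by nlinarith [abs_nonneg (y i0)]
    have h3 : δ^2 ≤ (1/8 : ℝ)^2 := by nlinarith
    have h4 : ((n:ℝ)-1) * β^2 ≤ 1/16 := by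
      have e1 : ((n:ℝ)-1) * β^2 ≤ n * β^2 := by nlinarith [sq_nonneg β]
      have e2 : (n:ℝ) * β^2 = 1/(16*n) := by
        rw [hβdef]; field_simp; ring
      have e3 : 1/(16*(n:ℝ)) ≤ 1/16 := by
        apply div_le_div_of_nonneg_left (by norm_num) (by norm_num) (by linarith)
      linarith
    nlinarith
  -- putting things together
  have hdisj : Disjoint E Gbox := by
    rw [Set.disjoint_left]
    rintro x ⟨_, hx2⟩ hxG
    have := hxG i0
    rw [if_pos rfl] at this
    exact absurd hx2 (not_lt.mpr (abs_le.mpr this))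
  have hGvol : volume Gbox = ENNReal.ofReal (2*δ * (2*β)^(n-1)) := by
    rw [hGdef, volume_box]
    have hprod : ∀ i : Fin n, volume (if i = i0 then Set.Icc (-δ) δ else Set.Icc (-β) β) =
        (if i = i0 then ENNReal.ofReal (2*δ) else ENNReal.ofReal (2*β)) := by
      intro i
      by_cases hi : i = i0 <;> simp [hi, Real.volume_Icc] <;> rw [← two_mul, ENNReal.ofReal_mul (by norm_num), ENNReal.ofReal_ofNat]
    rw [Finset.prod_congr rfl (fun i _ => hprod i)]
    rw [← Finset.mul_prod_erase Finset.univ _ (Finset.mem_univ i0), if_pos rfl]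
    have : ∀ i ∈ Finset.univ.erase i0,
        (if i = i0 then ENNReal.ofReal (2*δ) else ENNReal.ofReal (2*β)) =
        ENNReal.ofReal (2*β) := by
      intro i hi
      rw [if_neg (Finset.mem_erase.mp hi).1]
    rw [Finset.prod_congr rfl this, Finset.prod_const,
      Finset.card_erase_of_mem (Finset.mem_univ i0), Finset.card_univ, Fintype.card_fin,
      ← ENNReal.ofReal_pow (by positivity), ← ENNReal.ofReal_mul (by positivity)]
  have hEvol_le : volume E ≤ ωe := measure_mono inter_subset_left
  have hE0 : volume E ≠ 0 := hEpos.ne'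
  have hEt : volume E ≠ ⊤ := hEfin.ne
  have hfrac : ENNReal.ofReal ((2*β)^(n-1) / 2^(n+1) * (1 - α)) ≤ volume Gbox / volume E := by
    calc ENNReal.ofReal ((2*β)^(n-1) / 2^(n+1) * (1 - α))
        = ENNReal.ofReal (2*δ * (2*β)^(n-1) / ω) := by
          congr 1
          rw [hδdef]
          have h2n : (2:ℝ)^(n+1) ≠ 0 := by positivity
          have e1 : (2:ℝ)^(n+2) = 2 * 2^(n+1) := by rw [pow_succ]; ring
          rw [e1]
          field_simp
      _ = ENNReal.ofReal (2*δ * (2*β)^(n-1)) / ENNReal.ofReal ω := by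
          rw [ENNReal.ofReal_div_of_pos hω]
      _ = volume Gbox / ωe := by rw [hGvol, ENNReal.ofReal_toReal hωt]
      _ ≤ volume Gbox / volume E := ENNReal.div_le_div le_rfl hEvol_le
  calc (1 : ℝ≥0∞) + ENNReal.ofReal ((2*β)^(n-1) / 2^(n+1) * (1 - α))
      ≤ volume E / volume E + volume Gbox / volume E := by
        apply add_le_add _ hfrac
        rw [ENNReal.div_self hE0 hEt]
    _ = (volume E + volume Gbox) / volume E := (ENNReal.add_div).symm
    _ = volume (E ∪ Gbox) / volume E := by rw [measure_union hdisj hGmeas]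
    _ ≤ volume S / volume E :=
        ENNReal.div_le_div_right (measure_mono (union_subset hES hGS)) _
    _ ≤ CHLbc n α := by
        rw [CHLbc]
        refine le_iSup_of_le E ?_
        refine le_iSup_of_le hEmeas ?_
        refine le_iSup_of_le hEpos ?_
        exact le_iSup_of_le hEfin le_rfl

set_option maxHeartbeats 2000000 in
lemma CHLbc_upper (n : ℕ) (hn : 1 ≤ n) :
    ∃ C₀ : ℝ, 0 < C₀ ∧ ∀ α ∈ Set.Ioo (1/2 : ℝ) 1,
      CHLbc n α ≤ 1 + ENNReal.ofReal (C₀ * (1/α - 1)) := by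
  haveI : Nontrivial (EuclideanSpace ℝ (Fin n)) := by
    refine ⟨EuclideanSpace.single ⟨0, hn⟩ 1, 0, ?_⟩
    intro h
    have := congrArg norm h
    rw [EuclideanSpace.norm_single, norm_zero] at this
    norm_num at this
  obtain ⟨N, τ, hτ, hτN⟩ :=
    HasBesicovitchCovering.no_satelliteConfig (α := EuclideanSpace ℝ (Fin n))
  refine ⟨N + 1, by positivity, fun α hα => ?_⟩
  obtain ⟨hα2, hα1⟩ := hα
  have hα0 : 0 < α := by linarith
  have hαne : ENNReal.ofReal α ≠ 0 := by
    simp [ENNReal.ofReal_eq_zero]; linarith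
  have hinv1 : (0:ℝ) ≤ 1/α - 1 := by
    have : 1 < 1/α := by rw [lt_div_iff₀ hα0]; linarith
    linarith
  rw [CHLbc]
  refine iSup_le fun E => iSup_le fun hEmeas => iSup_le fun hEpos => iSup_le fun hEfin => ?_
  set S := {x : EuclideanSpace ℝ (Fin n) |
    MHLbc n (E.indicator 1) x > ENNReal.ofReal α} with hSdef
  set ωe := volume (Metric.ball (0 : EuclideanSpace ℝ (Fin n)) 1) with hωe
  have hω0 : ωe ≠ 0 := (Metric.measure_ball_pos _ _ one_pos).ne'
  have hωt : ωe ≠ ⊤ := measure_ball_lt_top.ne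
  set K : ℝ≥0∞ := volume E / ENNReal.ofReal α / ωe with hK
  have hKt : K ≠ ⊤ :=
    (ENNReal.div_lt_top (ENNReal.div_lt_top hEfin.ne hαne).ne hω0).ne
  set R₀ : ℝ := max 1 K.toReal with hR₀
  have hrad : ∀ x ∈ S, ∃ r : ℝ, 0 < r ∧ r ≤ R₀ ∧
      ENNReal.ofReal α * volume (Metric.ball x r) < volume (E ∩ Metric.ball x r) := by
    intro x hx
    have hx' : ENNReal.ofReal α < MHLbc n (E.indicator 1) x := hx
    rw [MHLbc, lt_iSup_iff] at hx'
    obtain ⟨r, hr⟩ := hx'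
    rw [lt_iSup_iff] at hr
    obtain ⟨hr0, hr'⟩ := hr
    rw [lintegral_indicator_ball hEmeas] at hr'
    have hkey : ENNReal.ofReal α * volume (Metric.ball x r) < volume (E ∩ Metric.ball x r) :=
      (ENNReal.lt_div_iff_mul_lt (Or.inl (Metric.measure_ball_pos _ _ hr0).ne')
        (Or.inl measure_ball_lt_top.ne)).mp hr'
    refine ⟨r, hr0, ?_, hkey⟩
    -- bound the radius
    have h1 : volume (Metric.ball x r) ≤ volume E / ENNReal.ofReal α := by
      rw [ENNReal.le_div_iff_mul_le (Or.inl hαne) (Or.inl ENNReal.ofReal_ne_top)]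
      rw [mul_comm]
      exact le_trans hkey.le (measure_mono inter_subset_left)
    have h2 : ENNReal.ofReal (r ^ n) * ωe ≤ volume E / ENNReal.ofReal α := by
      rw [Measure.addHaar_ball volume x hr0.le, finrank_euclideanSpace_fin] at h1
      exact h1
    have h3 : ENNReal.ofReal (r ^ n) ≤ K := by
      rw [hK, ENNReal.le_div_iff_mul_le (Or.inl hω0) (Or.inl hωt)]
      exact h2
    have h4 : r ^ n ≤ K.toReal := (ENNReal.ofReal_le_iff_le_toReal hKt).mp h3
    by_contra hcon
    push_neg at hcon
    have hr1 : 1 ≤ r := le_trans (le_max_left _ _) hcon.le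
    have : r ≤ r ^ n := le_self_pow₀ hr1 (by omega)
    have : r ≤ K.toReal := this.trans h4
    have : r ≤ R₀ := this.trans (le_max_right _ _)
    linarith
  -- Besicovitch covering
  let pkg : Besicovitch.BallPackage (↥(S \ E)) (EuclideanSpace ℝ (Fin n)) :=
    { c := Subtype.val
      r := fun b => (hrad b.1 b.2.1).choose
      rpos := fun b => (hrad b.1 b.2.1).choose_spec.1
      r_bound := R₀
      r_le := fun b => (hrad b.1 b.2.1).choose_spec.2.1 }
  obtain ⟨s, hs_disj, hs_cov⟩ := Besicovitch.exist_disjoint_covering_families hτ hτN pkg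
  have hrkey : ∀ b : ↥(S \ E), ENNReal.ofReal α * volume (Metric.ball (pkg.c b) (pkg.r b))
      < volume (E ∩ Metric.ball (pkg.c b) (pkg.r b)) :=
    fun b => (hrad b.1 b.2.1).choose_spec.2.2
  have hcount : ∀ i, (s i).Countable := by
    intro i
    refine (hs_disj i).countable_of_nonempty_interior fun j _ => ?_
    have h1 : (Metric.ball (pkg.c j) (pkg.r j)).Nonempty :=
      Metric.nonempty_ball.mpr (pkg.rpos j)
    obtain ⟨y, hy⟩ := h1
    exact ⟨y, Metric.ball_subset_interior_closedBall hy⟩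
  have hball_le : ∀ b : ↥(S \ E), volume (Metric.ball (pkg.c b) (pkg.r b))
      ≤ (ENNReal.ofReal α)⁻¹ * volume (E ∩ Metric.ball (pkg.c b) (pkg.r b)) := by
    intro b
    calc volume (Metric.ball (pkg.c b) (pkg.r b))
        = (ENNReal.ofReal α)⁻¹ * (ENNReal.ofReal α * volume (Metric.ball (pkg.c b) (pkg.r b))) := by
          rw [← mul_assoc, ENNReal.inv_mul_cancel hαne ENNReal.ofReal_ne_top, one_mul]
      _ ≤ (ENNReal.ofReal α)⁻¹ * volume (E ∩ Metric.ball (pkg.c b) (pkg.r b)) :=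
          mul_le_mul_right (hrkey b).le _
  have hsum_inter : ∀ i, ∑' j : s i, volume (E ∩ Metric.ball (pkg.c j) (pkg.r j))
      ≤ volume E := by
    intro i
    rw [← measure_biUnion (hcount i)
      ((hs_disj i).mono fun j => inter_subset_right.trans Metric.ball_subset_closedBall)
      (fun j _ => hEmeas.inter measurableSet_ball)]
    exact measure_mono (iUnion₂_subset fun j _ => inter_subset_left)
  have hfam : ∀ i : Fin N, volume (⋃ j ∈ s i, (Metric.ball (pkg.c j) (pkg.r j) \ E))
      ≤ ENNReal.ofReal (1/α - 1) * volume E := by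
    intro i
    rw [measure_biUnion (hcount i)
      ((hs_disj i).mono fun j => diff_subset.trans Metric.ball_subset_closedBall)
      (fun j _ => measurableSet_ball.diff hEmeas)]
    have hterm : ∀ j : s i, volume (Metric.ball (pkg.c j) (pkg.r j) \ E)
        ≤ (1 - ENNReal.ofReal α) * volume (Metric.ball (pkg.c j) (pkg.r j)) := by
      intro j
      have hBt : volume (Metric.ball (pkg.c j) (pkg.r j)) ≠ ⊤ := measure_ball_lt_top.ne
      have heq : Metric.ball (pkg.c j) (pkg.r j) \ E
          = Metric.ball (pkg.c j) (pkg.r j) \ (E ∩ Metric.ball (pkg.c j) (pkg.r j)) := by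
        rw [Set.diff_inter_self_eq_diff]
      rw [heq, measure_diff inter_subset_right
        ((hEmeas.inter measurableSet_ball).nullMeasurableSet)
        (lt_of_le_of_lt (measure_mono inter_subset_right) measure_ball_lt_top).ne]
      calc volume (Metric.ball (pkg.c j) (pkg.r j)) - volume (E ∩ Metric.ball (pkg.c j) (pkg.r j))
          ≤ volume (Metric.ball (pkg.c j) (pkg.r j))
            - ENNReal.ofReal α * volume (Metric.ball (pkg.c j) (pkg.r j)) :=
            tsub_le_tsub_left (hrkey j).le _
        _ = (1 - ENNReal.ofReal α) * volume (Metric.ball (pkg.c j) (pkg.r j)) := by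
            rw [ENNReal.sub_mul (fun _ _ => hBt), one_mul]
    calc ∑' j : s i, volume (Metric.ball (pkg.c j) (pkg.r j) \ E)
        ≤ ∑' j : s i, (1 - ENNReal.ofReal α) * volume (Metric.ball (pkg.c j) (pkg.r j)) :=
          ENNReal.tsum_le_tsum hterm
      _ = (1 - ENNReal.ofReal α) * ∑' j : s i, volume (Metric.ball (pkg.c j) (pkg.r j)) :=
          ENNReal.tsum_mul_left
      _ ≤ (1 - ENNReal.ofReal α) *
          ((ENNReal.ofReal α)⁻¹ * ∑' j : s i, volume (E ∩ Metric.ball (pkg.c j) (pkg.r j))) := by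
          apply mul_le_mul_right
          calc ∑' j : s i, volume (Metric.ball (pkg.c j) (pkg.r j))
              ≤ ∑' j : s i, (ENNReal.ofReal α)⁻¹ * volume (E ∩ Metric.ball (pkg.c j) (pkg.r j)) :=
                ENNReal.tsum_le_tsum (fun j => hball_le j)
            _ = (ENNReal.ofReal α)⁻¹ * ∑' j : s i, volume (E ∩ Metric.ball (pkg.c j) (pkg.r j)) :=
                ENNReal.tsum_mul_left
      _ ≤ (1 - ENNReal.ofReal α) * ((ENNReal.ofReal α)⁻¹ * volume E) :=
          mul_le_mul_right (mul_le_mul_right (hsum_inter i) _) _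
      _ = ENNReal.ofReal (1/α - 1) * volume E := by
          rw [← mul_assoc]
          congr 1
          rw [← ENNReal.ofReal_one, ← ENNReal.ofReal_sub 1 hα0.le, ← div_eq_mul_inv,
            ← ENNReal.ofReal_div_of_pos hα0]
          congr 1
          field_simp
  have hcov : S \ E ⊆ ⋃ i : Fin N, ⋃ j ∈ s i, Metric.ball (pkg.c j) (pkg.r j) :=
    fun x hx => hs_cov ⟨⟨x, hx⟩, rfl⟩
  have hSE : volume (S \ E) ≤ (N : ℝ≥0∞) * (ENNReal.ofReal (1/α - 1) * volume E) := by
    calc volume (S \ E)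
        ≤ volume (⋃ i : Fin N, ⋃ j ∈ s i, (Metric.ball (pkg.c j) (pkg.r j) \ E)) := by
          apply measure_mono
          intro x hx
          obtain ⟨i, hi⟩ := mem_iUnion.mp (hcov hx)
          obtain ⟨j, hj, hxj⟩ := mem_iUnion₂.mp hi
          exact mem_iUnion.mpr ⟨i, mem_iUnion₂.mpr ⟨j, hj, ⟨hxj, hx.2⟩⟩⟩
      _ ≤ ∑' i : Fin N, volume (⋃ j ∈ s i, (Metric.ball (pkg.c j) (pkg.r j) \ E)) :=
          measure_iUnion_le _
      _ ≤ ∑' _i : Fin N, ENNReal.ofReal (1/α - 1) * volume E := ENNReal.tsum_le_tsum hfam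
      _ = (N : ℝ≥0∞) * (ENNReal.ofReal (1/α - 1) * volume E) := by
          rw [tsum_fintype, Finset.sum_const, Finset.card_univ, Fintype.card_fin, nsmul_eq_mul]
  have htot : volume S ≤ (1 + ENNReal.ofReal (((N:ℝ) + 1) * (1/α - 1))) * volume E := by
    calc volume S ≤ volume (E ∪ (S \ E)) := by
          apply measure_mono
          intro x hx
          by_cases h : x ∈ E
          · exact Or.inl h
          · exact Or.inr ⟨hx, h⟩
      _ ≤ volume E + volume (S \ E) := measure_union_le _ _
      _ ≤ volume E + (N : ℝ≥0∞) * (ENNReal.ofReal (1/α - 1) * volume E) := add_le_add_right hSE _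
      _ ≤ volume E + ENNReal.ofReal (((N:ℝ) + 1) * (1/α - 1)) * volume E := by
          apply add_le_add_right
          rw [← mul_assoc]
          apply mul_le_mul_left
          calc (N : ℝ≥0∞) * ENNReal.ofReal (1/α - 1)
              = ENNReal.ofReal ((N:ℝ) * (1/α - 1)) := by
                rw [ENNReal.ofReal_mul (Nat.cast_nonneg N), ENNReal.ofReal_natCast]
            _ ≤ ENNReal.ofReal (((N:ℝ) + 1) * (1/α - 1)) :=
                ENNReal.ofReal_le_ofReal (by nlinarith [hinv1])
      _ = (1 + ENNReal.ofReal (((N:ℝ) + 1) * (1/α - 1))) * volume E := (one_add_mul _ _).symm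
  rw [ENNReal.div_le_iff hEpos.ne' hEfin.ne]
  exact htot

theorem centered_ball_solyanik_sharp (n : ℕ) (hn : 1 ≤ n) :
    (∃ c C : ℝ, 0 < c ∧ c ≤ C ∧ ∃ α₀ ∈ Set.Ioo (0 : ℝ) 1,
      ∀ α ∈ Set.Ioo α₀ 1,
        ENNReal.ofReal (c * (1 / α - 1)) ≤ CHLbc n α - 1 ∧
        CHLbc n α - 1 ≤ ENNReal.ofReal (C * (1 / α - 1))) ∧
    Filter.Tendsto (CHLbc n) (nhdsWithin 1 (Set.Iio 1)) (nhds 1) := by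
  obtain ⟨c₁, hc₁, hlow⟩ := CHLbc_lower n hn
  obtain ⟨C₀, hC₀, hup⟩ := CHLbc_upper n hn
  have hmem : Set.Ioo (1/2 : ℝ) 1 ∈ nhdsWithin (1:ℝ) (Set.Iio 1) :=
    Ioo_mem_nhdsLT_of_mem (by constructor <;> norm_num)
  constructor
  · refine ⟨c₁/2, max C₀ (c₁/2), by positivity, le_max_right _ _, 1/2,
      ⟨by norm_num, by norm_num⟩, ?_⟩
    intro α hα
    obtain ⟨hα2, hα1⟩ := hα
    have hα0 : 0 < α := by linarith
    have ht2 : 1/α < 2 := by rw [div_lt_iff₀ hα0]; linarith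
    have ht1 : 1 < 1/α := by rw [lt_div_iff₀ hα0]; linarith
    have h1α : (0:ℝ) ≤ 1/α - 1 := by linarith
    constructor
    · have h := hlow α ⟨hα2, hα1⟩
      have hle : ENNReal.ofReal (c₁/2 * (1/α - 1)) ≤ ENNReal.ofReal (c₁ * (1 - α)) := by
        apply ENNReal.ofReal_le_ofReal
        have h1a : (0:ℝ) ≤ 1 - α := by linarith
        have hkey : (1/α - 1) ≤ 2 * (1 - α) := by
          have e : α * (1/α) = 1 := by field_simp
          nlinarith [mul_le_mul_of_nonneg_left ht2.le h1a]
        nlinarith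
      exact hle.trans (ENNReal.le_sub_of_add_le_left ENNReal.one_ne_top h)
    · have h := hup α ⟨hα2, hα1⟩
      refine (tsub_le_iff_left.mpr h).trans (ENNReal.ofReal_le_ofReal ?_)
      exact mul_le_mul_of_nonneg_right (le_max_left _ _) h1α
  · apply tendsto_of_tendsto_of_tendsto_of_le_of_le' (g := fun _ : ℝ => (1:ℝ≥0∞))
      (h := fun α : ℝ => 1 + ENNReal.ofReal (C₀ * (1/α - 1)))
    · exact tendsto_const_nhds
    · have h0 : Tendsto (fun α : ℝ => C₀ * (1/α - 1)) (nhdsWithin 1 (Set.Iio 1)) (nhds 0) := by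
        have hc : ContinuousAt (fun α : ℝ => C₀ * (1/α - 1)) 1 :=
          continuousAt_const.mul ((continuousAt_const.div continuousAt_id one_ne_zero).sub
            continuousAt_const)
        have := hc.tendsto.mono_left (nhdsWithin_le_nhds (s := Set.Iio 1))
        simpa using this
      have h2 : Tendsto (fun α : ℝ => ENNReal.ofReal (C₀ * (1/α - 1)))
          (nhdsWithin 1 (Set.Iio 1)) (nhds (ENNReal.ofReal 0)) :=
        (ENNReal.continuous_ofReal.tendsto _).comp h0
      have h3 : Tendsto (fun α : ℝ => 1 + ENNReal.ofReal (C₀ * (1/α - 1)))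
          (nhdsWithin 1 (Set.Iio 1)) (nhds (1 + ENNReal.ofReal 0)) :=
        Tendsto.add tendsto_const_nhds h2
      simpa using h3
    · filter_upwards [hmem] with α hα
      exact le_trans le_self_add (hlow α hα)
    · filter_upwards [hmem] with α hα
      exact hup α hα
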